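/- Let X be a real Banach space with topological dual X*, let t > 0, let x : [0,∞) → X be cadlag (right-continuous with left limits at every point), and let y* : [0,∞) → X* be cadlag with finite total variation on [0,t]: T_t(y*) := sup_σ Σ_i ‖y*(t_i) − y*(t_{i−1})‖_{X*} < ∞, the supremum being over all finite partitions σ = {0 = t_0 < t_1 < ⋯ < t_m = t} of [0,t]. Then the left-endpoint Riemann–Stieltjes sums converge as the mesh tends to zero: there exists L ∈ ℝ such that for every ε > 0 there is δ > 0 so that for every finite partition 0 = t_0 < t_1 < ⋯ < t_m = t with max_i (t_{i+1} − t_i) < δ, one has |Σ_{i=0}^{m−1} ⟨x(t_i), y*(t_{i+1}) − y*(t_i)⟩ − L| < ε, where ⟨h, h*⟩ = h*(h) denotes the duality pairing between X and X*. -/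

import Mathlib

open Filter Set


/-- A function on `[0,∞)` (modelled as a function on `ℝ`) with values in a
topological space is cadlag if it is right-continuous at every point of `[0,∞)`
and has left limits at every point of `(0,∞)`. -/
def IsCadlag {E : Type*} [TopologicalSpace E] (f : ℝ → E) : Prop :=
  (∀ s : ℝ, 0 ≤ s → ContinuousWithinAt f (Set.Ici s) s) ∧
  (∀ s : ℝ, 0 < s → ∃ L : E, Tendsto f (nhdsWithin s (Set.Iio s)) (nhds L))

/-- A finite partition `0 = τ 0 < τ 1 < ⋯ < τ m = t` of the interval `[0,t]`. -/
structure IntervalPartition (t : ℝ) where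
  m : ℕ
  τ : ℕ → ℝ
  m_pos : 0 < m
  first : τ 0 = 0
  last : τ m = t
  increasing : ∀ i < m, τ i < τ (i + 1)

section RSAux


attribute [local instance] Classical.propDecidable

/-- points of a partition step function are monotone -/
lemma steps_le {s : ℕ → ℝ} {k : ℕ} (h : ∀ i < k, s i < s (i + 1)) :
    ∀ {i j : ℕ}, i ≤ j → j ≤ k → s i ≤ s j := by
  intro i j hij hjk
  induction j with
  | zero => simp_all
  | succ n ih =>
    rcases Nat.lt_or_ge i (n+1) with hi | hi
    · have h1 : s i ≤ s n := ih (Nat.lt_succ_iff.mp hi) (le_trans (Nat.le_succ n) hjk)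
      exact le_trans h1 (le_of_lt (h n (Nat.lt_of_succ_le hjk)))
    · have : i = n + 1 := le_antisymm hij hi
      simp [this]

lemma steps_lt {s : ℕ → ℝ} {k : ℕ} (h : ∀ i < k, s i < s (i + 1)) :
    ∀ {i j : ℕ}, i < j → j ≤ k → s i < s j := by
  intro i j hij hjk
  have h1 : s (i+1) ≤ s j := steps_le h hij hjk
  exact lt_of_lt_of_le (h i (lt_of_lt_of_le hij hjk)) h1

/-- the next point of a finite set after `u` -/
noncomputable def nxt (F : Finset ℝ) (u : ℝ) : ℝ :=
  if h : (F.filter fun w => u < w).Nonempty then (F.filter fun w => u < w).min' h else u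

/-- the last point of a finite set at or before `u` -/
noncomputable def prd (F : Finset ℝ) (u : ℝ) : ℝ :=
  if h : (F.filter fun w => w ≤ u).Nonempty then (F.filter fun w => w ≤ u).max' h else u

/-- `F` is a partition of `[a,b]` -/
def Partn (a b : ℝ) (F : Finset ℝ) : Prop :=
  a ∈ F ∧ b ∈ F ∧ ∀ w ∈ F, a ≤ w ∧ w ≤ b

lemma nxt_spec {F : Finset ℝ} {u z : ℝ} (hz : z ∈ F) (huz : u < z) :
    nxt F u ∈ F ∧ u < nxt F u ∧ ∀ w ∈ F, u < w → nxt F u ≤ w := by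
  have hne : (F.filter fun w => u < w).Nonempty := ⟨z, Finset.mem_filter.mpr ⟨hz, huz⟩⟩
  rw [nxt, dif_pos hne]
  have h1 := Finset.min'_mem _ hne
  rw [Finset.mem_filter] at h1
  exact ⟨h1.1, h1.2, fun w hw huw => Finset.min'_le _ _ (Finset.mem_filter.mpr ⟨hw, huw⟩)⟩

lemma prd_spec {F : Finset ℝ} {u z : ℝ} (hz : z ∈ F) (huz : z ≤ u) :
    prd F u ∈ F ∧ prd F u ≤ u ∧ ∀ w ∈ F, w ≤ u → w ≤ prd F u := by
  have hne : (F.filter fun w => w ≤ u).Nonempty := ⟨z, Finset.mem_filter.mpr ⟨hz, huz⟩⟩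
  rw [prd, dif_pos hne]
  have h1 := Finset.max'_mem _ hne
  rw [Finset.mem_filter] at h1
  exact ⟨h1.1, h1.2, fun w hw huw => Finset.le_max' (F.filter fun v => v ≤ u) w (Finset.mem_filter.mpr ⟨hw, huw⟩)⟩

/-- telescoping along a finite set -/
lemma tele {E : Type*} [AddCommGroup E] (f : ℝ → E) (G : Finset ℝ) :
    ∀ (n : ℕ) (p q : ℝ), p ∈ G → q ∈ G → p < q →
      (G.filter fun w => p ≤ w ∧ w < q).card ≤ n →
      (∑ w ∈ G.filter fun w => p ≤ w ∧ w < q, (f (nxt G w) - f w)) = f q - f p := by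
  intro n
  induction n with
  | zero =>
    intro p q hp hq hpq hcard
    exfalso
    have : p ∈ G.filter fun w => p ≤ w ∧ w < q := Finset.mem_filter.mpr ⟨hp, le_refl p, hpq⟩
    have := Finset.card_pos.mpr ⟨p, this⟩
    omega
  | succ n ih =>
    intro p q hp hq hpq hcard
    set A := G.filter fun w => p ≤ w ∧ w < q with hA
    have hpA : p ∈ A := Finset.mem_filter.mpr ⟨hp, le_refl p, hpq⟩
    have hAne : A.Nonempty := ⟨p, hpA⟩
    set w' := A.max' hAne with hw'
    have hw'A : w' ∈ A := Finset.max'_mem _ hAne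
    have hw'G : w' ∈ G := (Finset.mem_filter.mp hw'A).1
    have hw'p : p ≤ w' := (Finset.mem_filter.mp hw'A).2.1
    have hw'q : w' < q := (Finset.mem_filter.mp hw'A).2.2
    have hnxt : nxt G w' = q := by
      obtain ⟨h1, h2, h3⟩ := nxt_spec hq hw'q
      have h4 : ¬ (nxt G w' < q) := by
        intro hlt
        have : nxt G w' ∈ A := Finset.mem_filter.mpr ⟨h1, le_trans hw'p (le_of_lt h2), hlt⟩
        have := Finset.le_max' A _ this
        rw [← hw'] at this
        exact absurd h2 (not_lt.mpr this)
      have h5 : nxt G w' ≤ q := h3 q hq hw'q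
      exact le_antisymm h5 (not_lt.mp h4)
    rcases eq_or_lt_of_le hw'p with heq | hlt
    · -- A = {p}
      have hA1 : A = {p} := by
        apply Finset.eq_singleton_iff_unique_mem.mpr
        refine ⟨hpA, fun y hy => ?_⟩
        have h1 := Finset.le_max' A y hy
        rw [← hw', ← heq] at h1
        exact le_antisymm h1 (Finset.mem_filter.mp hy).2.1
      rw [hA1, Finset.sum_singleton]
      rw [← heq] at hnxt
      rw [hnxt]
    · -- remove w'
      have hAe : A.erase w' = G.filter fun w => p ≤ w ∧ w < w' := by
        ext y
        simp only [Finset.mem_erase, hA, Finset.mem_filter]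
        constructor
        · rintro ⟨hne, hyG, hyp, hyq⟩
          refine ⟨hyG, hyp, ?_⟩
          have := Finset.le_max' A y (Finset.mem_filter.mpr ⟨hyG, hyp, hyq⟩)
          rw [← hw'] at this
          exact lt_of_le_of_ne this hne
        · rintro ⟨hyG, hyp, hyw⟩
          exact ⟨ne_of_lt hyw, hyG, hyp, lt_trans hyw hw'q⟩
      have hsum := Finset.add_sum_erase A (fun w => f (nxt G w) - f w) hw'A
      have hcard2 : (G.filter fun w => p ≤ w ∧ w < w').card ≤ n := by
        rw [← hAe]
        have := Finset.card_erase_of_mem hw'A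
        omega
      have hih := ih p w' hp hw'G hlt hcard2
      rw [← hsum, hAe, hih]
      simp only [hnxt]
      abel


variable {E : Type*} [SeminormedAddCommGroup E]

/-- variation sum of `f` along the partition `F` (top point `b` excluded) -/
noncomputable def vsum (f : ℝ → E) (b : ℝ) (F : Finset ℝ) : ℝ :=
  ∑ w ∈ F.filter fun w => w < b, ‖f (nxt F w) - f w‖

/-- total variation of `f` on `[a,b]`, via partitions -/
noncomputable def Var (f : ℝ → E) (a b : ℝ) : ℝ :=
  sSup {r | ∃ F, Partn a b F ∧ r = vsum f b F}

lemma vsum_nonneg (f : ℝ → E) (b : ℝ) (F : Finset ℝ) : 0 ≤ vsum f b F :=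
  Finset.sum_nonneg fun _ _ => norm_nonneg _

lemma partn_pair {a b : ℝ} (hab : a ≤ b) : Partn a b ({a, b} : Finset ℝ) := by
  refine ⟨Finset.mem_insert_self _ _, by simp, fun w hw => ?_⟩
  rcases Finset.mem_insert.mp hw with h | h
  · exact ⟨le_of_eq h.symm, h ▸ hab⟩
  · rw [Finset.mem_singleton] at h
    exact ⟨h ▸ hab, le_of_eq h⟩

lemma nxt_extend {F : Finset ℝ} {a b a' b' w : ℝ} (hF : Partn a b F) (ha' : a' ≤ a)
    (hb' : b ≤ b') (hw : w ∈ F) (hwb : w < b) :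
    nxt (insert a' (insert b' F)) w = nxt F w := by
  obtain ⟨hn1, hn2, hn3⟩ := nxt_spec hF.2.1 hwb
  have hnF' : nxt F w ∈ insert a' (insert b' F) := by simp [hn1]
  obtain ⟨hm1, hm2, hm3⟩ := nxt_spec hnF' hn2
  have hmn : nxt (insert a' (insert b' F)) w ≤ nxt F w := hm3 _ hnF' hn2
  rcases Finset.mem_insert.mp hm1 with h | h
  · exfalso
    have := (hF.2.2 w hw).1
    rw [h] at hm2; linarith
  rcases Finset.mem_insert.mp h with h | h
  · have h1 : nxt F w ≤ b := (hF.2.2 _ hn1).2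
    rw [h] at hmn ⊢; linarith [le_antisymm hmn (le_trans h1 hb')]
  · exact le_antisymm hmn (hn3 _ h hm2)

lemma partn_extend {F : Finset ℝ} {a b a' b' : ℝ} (hF : Partn a b F) (ha' : a' ≤ a)
    (hb' : b ≤ b') : Partn a' b' (insert a' (insert b' F)) := by
  refine ⟨Finset.mem_insert_self _ _, by simp, fun w hw => ?_⟩
  have hab : a ≤ b := le_trans (hF.2.2 a hF.1).1 (hF.2.2 a hF.1).2
  rcases Finset.mem_insert.mp hw with h | h
  · exact ⟨le_of_eq h.symm, h ▸ le_trans ha' (le_trans hab hb')⟩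
  rcases Finset.mem_insert.mp h with h | h
  · exact ⟨h ▸ le_trans ha' (le_trans hab hb'), le_of_eq h⟩
  · exact ⟨le_trans ha' (hF.2.2 w h).1, le_trans (hF.2.2 w h).2 hb'⟩

lemma vsum_extend (f : ℝ → E) {F : Finset ℝ} {a b a' b' : ℝ} (hF : Partn a b F) (ha' : a' ≤ a)
    (hb' : b ≤ b') : vsum f b F ≤ vsum f b' (insert a' (insert b' F)) := by
  have h1 : vsum f b F =
      ∑ w ∈ F.filter fun w => w < b, ‖f (nxt (insert a' (insert b' F)) w) - f w‖ := by
    refine Finset.sum_congr rfl fun w hw => ?_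
    rw [Finset.mem_filter] at hw
    rw [nxt_extend hF ha' hb' hw.1 hw.2]
  rw [h1, vsum]
  refine Finset.sum_le_sum_of_subset_of_nonneg ?_ fun _ _ _ => norm_nonneg _
  intro w hw
  rw [Finset.mem_filter] at hw ⊢
  exact ⟨by simp [hw.1], lt_of_lt_of_le hw.2 hb'⟩

variable {f : ℝ → E} {a b c C : ℝ}

lemma var_set_nonempty (hab : a ≤ b) :
    {r | ∃ F, Partn a b F ∧ r = vsum f b F}.Nonempty :=
  ⟨_, {a, b}, partn_pair hab, rfl⟩

lemma vsum_le_Var (hbd : ∀ F, Partn a b F → vsum f b F ≤ C) {F : Finset ℝ}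
    (hF : Partn a b F) : vsum f b F ≤ Var f a b :=
  le_csSup ⟨C, by rintro r ⟨F', hF', rfl⟩; exact hbd F' hF'⟩ ⟨F, hF, rfl⟩

lemma Var_nonneg (hab : a ≤ b) (hbd : ∀ F, Partn a b F → vsum f b F ≤ C) :
    0 ≤ Var f a b :=
  le_trans (vsum_nonneg f b {a, b}) (vsum_le_Var hbd (partn_pair hab))

lemma Var_le (hab : a ≤ b) (hbd : ∀ F, Partn a b F → vsum f b F ≤ C) : Var f a b ≤ C := by
  refine csSup_le (var_set_nonempty hab) ?_
  rintro r ⟨F, hF, rfl⟩; exact hbd F hF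

lemma exists_vsum_gt (hab : a ≤ b) {r : ℝ} (hr : r < Var f a b) :
    ∃ F, Partn a b F ∧ r < vsum f b F := by
  obtain ⟨s, hs, hrs⟩ := exists_lt_of_lt_csSup (var_set_nonempty hab) hr
  obtain ⟨F, hF, rfl⟩ := hs
  exact ⟨F, hF, hrs⟩

lemma Var_mono (hbd : ∀ F, Partn a b F → vsum f b F ≤ C) {a' b' : ℝ} (haa' : a ≤ a')
    (ha'b' : a' ≤ b') (hb'b : b' ≤ b) : Var f a' b' ≤ Var f a b := by
  refine csSup_le (var_set_nonempty ha'b') ?_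
  rintro r ⟨F, hF, rfl⟩
  exact le_trans (vsum_extend f hF haa' hb'b) (vsum_le_Var hbd (partn_extend hF haa' hb'b))

lemma nxt_union_left {F₁ F₂ : Finset ℝ} {a b c w : ℝ} (h₁ : Partn a b F₁) (h₂ : Partn b c F₂)
    (hw : w ∈ F₁) (hwb : w < b) : nxt (F₁ ∪ F₂) w = nxt F₁ w := by
  obtain ⟨hn1, hn2, hn3⟩ := nxt_spec h₁.2.1 hwb
  have hnU : nxt F₁ w ∈ F₁ ∪ F₂ := Finset.mem_union_left _ hn1
  obtain ⟨hm1, hm2, hm3⟩ := nxt_spec hnU hn2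
  have hmn : nxt (F₁ ∪ F₂) w ≤ nxt F₁ w := hm3 _ hnU hn2
  rcases Finset.mem_union.mp hm1 with h | h
  · exact le_antisymm hmn (hn3 _ h hm2)
  · have hb1 : b ≤ nxt (F₁ ∪ F₂) w := (h₂.2.2 _ h).1
    have hb2 : nxt F₁ w ≤ b := (h₁.2.2 _ hn1).2
    exact le_antisymm hmn (le_trans hb2 hb1)

lemma nxt_union_right {F₁ F₂ : Finset ℝ} {a b c w : ℝ} (h₁ : Partn a b F₁) (h₂ : Partn b c F₂)
    (hw : w ∈ F₂) (hwc : w < c) : nxt (F₁ ∪ F₂) w = nxt F₂ w := by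
  obtain ⟨hn1, hn2, hn3⟩ := nxt_spec h₂.2.1 hwc
  have hnU : nxt F₂ w ∈ F₁ ∪ F₂ := Finset.mem_union_right _ hn1
  obtain ⟨hm1, hm2, hm3⟩ := nxt_spec hnU hn2
  have hmn : nxt (F₁ ∪ F₂) w ≤ nxt F₂ w := hm3 _ hnU hn2
  rcases Finset.mem_union.mp hm1 with h | h
  · exfalso
    have hx1 : nxt (F₁ ∪ F₂) w ≤ b := (h₁.2.2 _ h).2
    have hx2 : b ≤ w := (h₂.2.2 _ hw).1
    linarith
  · exact le_antisymm hmn (hn3 _ h hm2)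

lemma partn_union {F₁ F₂ : Finset ℝ} (h₁ : Partn a b F₁) (h₂ : Partn b c F₂) :
    Partn a c (F₁ ∪ F₂) := by
  have hab : a ≤ b := le_trans (h₁.2.2 a h₁.1).1 (h₁.2.2 a h₁.1).2
  have hbc : b ≤ c := le_trans (h₂.2.2 b h₂.1).1 (h₂.2.2 b h₂.1).2
  refine ⟨Finset.mem_union_left _ h₁.1, Finset.mem_union_right _ h₂.2.1, fun w hw => ?_⟩
  rcases Finset.mem_union.mp hw with h | h
  · exact ⟨(h₁.2.2 w h).1, le_trans (h₁.2.2 w h).2 hbc⟩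
  · exact ⟨le_trans hab (h₂.2.2 w h).1, (h₂.2.2 w h).2⟩

lemma vsum_union {F₁ F₂ : Finset ℝ} {a b c : ℝ} (h₁ : Partn a b F₁) (h₂ : Partn b c F₂)
    (hbc : b ≤ c) : vsum f b F₁ + vsum f c F₂ ≤ vsum f c (F₁ ∪ F₂) := by
  have hA : vsum f b F₁ = ∑ w ∈ F₁.filter fun w => w < b, ‖f (nxt (F₁ ∪ F₂) w) - f w‖ :=
    Finset.sum_congr rfl fun w hw => by
      rw [Finset.mem_filter] at hw; rw [nxt_union_left h₁ h₂ hw.1 hw.2]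
  have hB : vsum f c F₂ = ∑ w ∈ F₂.filter fun w => w < c, ‖f (nxt (F₁ ∪ F₂) w) - f w‖ :=
    Finset.sum_congr rfl fun w hw => by
      rw [Finset.mem_filter] at hw; rw [nxt_union_right h₁ h₂ hw.1 hw.2]
  have hdisj : Disjoint (F₁.filter fun w => w < b) (F₂.filter fun w => w < c) := by
    rw [Finset.disjoint_left]
    intro w hw1 hw2
    rw [Finset.mem_filter] at hw1 hw2
    have := (h₂.2.2 w hw2.1).1
    linarith [hw1.2]
  rw [hA, hB, ← Finset.sum_union hdisj]
  refine Finset.sum_le_sum_of_subset_of_nonneg ?_ fun _ _ _ => norm_nonneg _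
  intro w hw
  rcases Finset.mem_union.mp hw with h | h <;> rw [Finset.mem_filter] at h ⊢
  · exact ⟨Finset.mem_union_left _ h.1, lt_of_lt_of_le h.2 hbc⟩
  · exact ⟨Finset.mem_union_right _ h.1, h.2⟩

lemma Var_superadd (hab : a ≤ b) (hbc : b ≤ c)
    (hbd : ∀ F, Partn a c F → vsum f c F ≤ C) :
    Var f a b + Var f b c ≤ Var f a c := by
  have key : ∀ F₂, Partn b c F₂ → Var f a b + vsum f c F₂ ≤ Var f a c := by
    intro F₂ h₂
    have h3 : Var f a b ≤ Var f a c - vsum f c F₂ := by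
      refine csSup_le (var_set_nonempty hab) ?_
      rintro r ⟨F₁, h₁, rfl⟩
      have h4 := vsum_union (f := f) h₁ h₂ hbc
      have h6 := vsum_le_Var hbd (partn_union h₁ h₂)
      linarith
    linarith
  have h7 : Var f b c ≤ Var f a c - Var f a b := by
    refine csSup_le (var_set_nonempty hbc) ?_
    rintro r ⟨F₂, h₂, rfl⟩
    linarith [key F₂ h₂]
  linarith


lemma Var_right_small {f : ℝ → E} {c t C : ℝ} (hc : c < t)
    (hrc : ContinuousWithinAt f (Ici c) c)
    (hbd : ∀ a b : ℝ, c ≤ a → a ≤ b → b ≤ t → ∀ F, Partn a b F → vsum f b F ≤ C)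
    {ε : ℝ} (hε : 0 < ε) : ∃ d, c < d ∧ d ≤ t ∧ Var f c d < ε := by
  by_contra hcon
  push_neg at hcon
  obtain ⟨η, hη, hηs⟩ : ∃ η > 0, ∀ s, c ≤ s → s < c + η → ‖f s - f c‖ < ε/8 := by
    obtain ⟨δ, hδ, h⟩ := Metric.continuousWithinAt_iff.mp hrc (ε/8) (by linarith)
    refine ⟨δ, hδ, fun s hs1 hs2 => ?_⟩
    have := h (mem_Ici.mpr hs1) (by rw [Real.dist_eq, abs_of_nonneg (by linarith)]; linarith)
    rwa [dist_eq_norm] at this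
  set d0 := min (c + η/2) t with hd0def
  have hd0c : c < d0 := lt_min (by linarith) hc
  have hd0t : d0 ≤ t := min_le_right _ _
  have hosc : ∀ s s', c ≤ s → s ≤ d0 → c ≤ s' → s' ≤ d0 → ‖f s - f s'‖ ≤ ε/4 := by
    intro s s' h1 h2 h3 h4
    have hm := min_le_left (c + η/2) t
    have e1 : ‖f s - f c‖ < ε/8 := hηs s h1 (by rw [hd0def] at h2; linarith)
    have e2 : ‖f s' - f c‖ < ε/8 := hηs s' h3 (by rw [hd0def] at h4; linarith)
    have hid : f s - f s' = (f s - f c) - (f s' - f c) := by abel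
    rw [hid]
    have := norm_sub_le (f s - f c) (f s' - f c)
    linarith
  have step2 : ∀ u, c < u → u ≤ d0 → ∃ u', c < u' ∧ u' < u ∧ ε/2 ≤ Var f u' u := by
    intro u hcu hud0
    have hVu : ε ≤ Var f c u := hcon u hcu (le_trans hud0 hd0t)
    obtain ⟨F, hF, hvF⟩ := exists_vsum_gt (le_of_lt hcu)
      (lt_of_lt_of_le (by linarith : (3:ℝ)/4*ε < ε) hVu)
    obtain ⟨hc'F, hcc', hc'min⟩ := nxt_spec hF.2.1 hcu
    set c' := nxt F c with hc'def
    have hc'u : c' ≤ u := (hF.2.2 _ hc'F).2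
    have hcmem : c ∈ F.filter fun w => w < u := Finset.mem_filter.mpr ⟨hF.1, hcu⟩
    have hsplit := Finset.add_sum_erase (F.filter fun w => w < u)
      (fun w => ‖f (nxt F w) - f w‖) hcmem
    set F' := F.erase c with hF'def
    have hwgt : ∀ w ∈ F', c < w ∧ c' ≤ w ∧ w ≤ u := by
      intro w hw
      have h1 : c < w := lt_of_le_of_ne (hF.2.2 w (Finset.mem_of_mem_erase hw)).1
        (Ne.symm (Finset.ne_of_mem_erase hw))
      exact ⟨h1, hc'min w (Finset.mem_of_mem_erase hw) h1, (hF.2.2 w (Finset.mem_of_mem_erase hw)).2⟩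
    have hset : (F.filter fun w => w < u).erase c = F'.filter fun w => w < u := by
      ext y
      simp only [Finset.mem_erase, Finset.mem_filter, hF'def]
      tauto
    have hnxt' : ∀ w ∈ F', nxt F' w = nxt F w := by
      intro w hw
      have hfil : F'.filter (fun v => w < v) = F.filter fun v => w < v := by
        ext y
        simp only [Finset.mem_filter, hF'def, Finset.mem_erase]
        constructor
        · rintro ⟨⟨_, h1⟩, h2⟩; exact ⟨h1, h2⟩
        · rintro ⟨h1, h2⟩
          exact ⟨⟨by have := (hwgt w hw).1; intro hy; rw [hy] at h2; linarith, h1⟩, h2⟩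
      rw [nxt, nxt, hfil]
    have hPartn' : Partn c' u F' := by
      refine ⟨by rw [hF'def]; exact Finset.mem_erase.mpr ⟨ne_of_gt hcc', hc'F⟩, ?_, fun w hw => ⟨(hwgt w hw).2.1, (hwgt w hw).2.2⟩⟩
      rw [hF'def]; exact Finset.mem_erase.mpr ⟨ne_of_gt hcu, hF.2.1⟩
    have hvsum' : vsum f u F' = vsum f u F - ‖f c' - f c‖ := by
      rw [vsum, vsum]
      have h1 : ∑ w ∈ F'.filter fun w => w < u, ‖f (nxt F' w) - f w‖ =
          ∑ w ∈ F'.filter fun w => w < u, ‖f (nxt F w) - f w‖ :=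
        Finset.sum_congr rfl fun w hw => by rw [hnxt' w (Finset.mem_filter.mp hw).1]
      rw [h1, ← hset]
      have := hsplit
      rw [hc'def] at *
      linarith [hsplit]
    have hfc : ‖f c' - f c‖ ≤ ε/4 :=
      hosc c' c (le_of_lt hcc') (le_trans hc'u hud0) le_rfl (le_of_lt hd0c)
    have hvv : ε/2 ≤ vsum f u F' := by rw [hvsum']; linarith
    have hc'lt : c' < u := by
      rcases lt_or_eq_of_le hc'u with h | h
      · exact h
      · exfalso
        have hempty : F'.filter (fun w => w < u) = ∅ := by
          rw [Finset.filter_eq_empty_iff]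
          intro w hw
          have := (hwgt w hw).2.1
          rw [h] at this
          linarith
        rw [vsum, hempty, Finset.sum_empty] at hvv
        linarith
    refine ⟨c', hcc', hc'lt, le_trans hvv (vsum_le_Var (C := C) ?_ hPartn')⟩
    exact fun G hG => hbd c' u (le_of_lt hcc') (le_of_lt hc'lt) (le_trans hud0 hd0t) G hG
  have hgex : ∀ u : {v : ℝ // c < v ∧ v ≤ d0}, ∃ u' : {v : ℝ // c < v ∧ v ≤ d0},
      u'.1 < u.1 ∧ ε/2 ≤ Var f u'.1 u.1 := by
    rintro ⟨u, hu1, hu2⟩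
    obtain ⟨u', h1, h2, h3⟩ := step2 u hu1 hu2
    exact ⟨⟨u', h1, le_trans (le_of_lt h2) hu2⟩, h2, h3⟩
  choose g hg1 hg2 using hgex
  set seq : ℕ → {v : ℝ // c < v ∧ v ≤ d0} :=
    fun n => Nat.rec ⟨d0, hd0c, le_rfl⟩ (fun _ p => g p) n with hseq
  have hbd' : ∀ a b : ℝ, c ≤ a → a ≤ b → b ≤ d0 → ∀ F, Partn a b F → vsum f b F ≤ C :=
    fun a b h1 h2 h3 F hF => hbd a b h1 h2 (le_trans h3 hd0t) F hF
  have hlow : ∀ n : ℕ, (n : ℝ) * (ε/2) ≤ Var f (seq n).1 d0 := by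
    intro n
    induction n with
    | zero =>
      have : (seq 0).1 = d0 := rfl
      rw [this]
      push_cast
      rw [zero_mul]
      exact Var_nonneg le_rfl (hbd' d0 d0 (le_of_lt hd0c) le_rfl le_rfl)
    | succ n ih =>
      have h1 : ε/2 ≤ Var f (seq (n+1)).1 (seq n).1 := hg2 (seq n)
      have h2 : (seq (n+1)).1 < (seq n).1 := hg1 (seq n)
      have h3 := Var_superadd (le_of_lt h2) ((seq n).2.2)
        (hbd' (seq (n+1)).1 d0 (le_of_lt (seq (n+1)).2.1) (le_trans (le_of_lt h2) (seq n).2.2) le_rfl)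
      push_cast
      linarith
  have hupper : ∀ n : ℕ, Var f (seq n).1 d0 ≤ C := fun n =>
    Var_le ((seq n).2.2) (hbd' (seq n).1 d0 (le_of_lt (seq n).2.1) (seq n).2.2 le_rfl)
  obtain ⟨n, hn⟩ := exists_nat_gt (C / (ε/2))
  rw [div_lt_iff₀ (by linarith)] at hn
  linarith [hlow n, hupper n]

lemma find_block {s : ℕ → ℝ} {k : ℕ} (hk : 0 < k) (h0 : s 0 = 0)
    (hinc : ∀ j < k, s j < s (j + 1)) {u : ℝ} (hu0 : 0 ≤ u) (hut : u < s k) :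
    Nat.findGreatest (fun j => s j ≤ u) k < k ∧ s (Nat.findGreatest (fun j => s j ≤ u) k) ≤ u ∧
      u < s (Nat.findGreatest (fun j => s j ≤ u) k + 1) := by
  set J := Nat.findGreatest (fun j => s j ≤ u) k with hJ
  have hJk : J ≤ k := Nat.findGreatest_le k
  have hJs : s J ≤ u :=
    Nat.findGreatest_spec (P := fun j => s j ≤ u) (Nat.zero_le k) (by simp [h0, hu0])
  have hJlt : J < k := by
    rcases lt_or_eq_of_le hJk with h | h
    · exact h
    · exfalso; rw [h] at hJs; linarith
  refine ⟨hJlt, hJs, ?_⟩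
  have := Nat.findGreatest_is_greatest (show J < J + 1 by omega) (by omega : J + 1 ≤ k)
  exact lt_of_not_ge this

lemma cadlag_osc {f : ℝ → E} (hf : IsCadlag f) {t ε : ℝ} (ht : 0 < t) (hε : 0 < ε) :
    ∃ (k : ℕ) (s : ℕ → ℝ), 0 < k ∧ s 0 = 0 ∧ s k = t ∧ (∀ j < k, s j < s (j + 1)) ∧
      ∀ j < k, ∀ u v : ℝ, s j ≤ u → u < s (j + 1) → s j ≤ v → v < s (j + 1) →
        ‖f u - f v‖ ≤ ε := by
  set P : ℝ → Prop := fun r =>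
    ∃ (k : ℕ) (s : ℕ → ℝ), 0 < k ∧ s 0 = 0 ∧ s k = r ∧ (∀ j < k, s j < s (j + 1)) ∧
      ∀ j < k, ∀ u v : ℝ, s j ≤ u → u < s (j + 1) → s j ≤ v → v < s (j + 1) →
        ‖f u - f v‖ ≤ ε with hP
  have hext : ∀ r r' : ℝ, P r → r < r' →
      (∀ u v : ℝ, r ≤ u → u < r' → r ≤ v → v < r' → ‖f u - f v‖ ≤ ε) → P r' := by
    rintro r r' ⟨k, s, hk, h0, hr, hinc, hosc⟩ hrr' hblk
    set s' : ℕ → ℝ := fun j => if j ≤ k then s j else r' with hs'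
    have hs'le : ∀ j, j ≤ k → s' j = s j := fun j hj => if_pos hj
    have hs'succ : s' (k + 1) = r' := if_neg (Nat.not_succ_le_self k)
    refine ⟨k + 1, s', by omega, by rw [hs'le 0 (Nat.zero_le k), h0], hs'succ, ?_, ?_⟩
    · intro j hj
      rcases lt_or_eq_of_le (Nat.lt_succ_iff.mp hj) with h | h
      · rw [hs'le j (le_of_lt h), hs'le (j + 1) (Nat.succ_le_of_lt h)]
        exact hinc j h
      · rw [h, hs'le k le_rfl, hs'succ, hr]
        exact hrr'
    · intro j hj u v h1 h2 h3 h4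
      rcases lt_or_eq_of_le (Nat.lt_succ_iff.mp hj) with h | h
      · rw [hs'le j (le_of_lt h)] at h1 h3
        rw [hs'le (j + 1) (Nat.succ_le_of_lt h)] at h2 h4
        exact hosc j h u v h1 h2 h3 h4
      · rw [h] at h1 h2 h3 h4
        rw [hs'le k le_rfl, hr] at h1 h3
        rw [hs'succ] at h2 h4
        exact hblk u v h1 h2 h3 h4
  have hrc : ∀ c : ℝ, 0 ≤ c → ∃ η > 0, ∀ u v : ℝ, c ≤ u → u < c + η → c ≤ v → v < c + η →
      ‖f u - f v‖ ≤ ε := by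
    intro c hc
    obtain ⟨δ, hδ, h⟩ := Metric.continuousWithinAt_iff.mp (hf.1 c hc) (ε/2) (by linarith)
    refine ⟨δ, hδ, fun u v h1 h2 h3 h4 => ?_⟩
    have e1 := h (mem_Ici.mpr h1) (by rw [Real.dist_eq, abs_of_nonneg (by linarith)]; linarith)
    have e2 := h (mem_Ici.mpr h3) (by rw [Real.dist_eq, abs_of_nonneg (by linarith)]; linarith)
    rw [dist_eq_norm] at e1 e2
    have hid : f u - f v = (f u - f c) - (f v - f c) := by abel
    rw [hid]
    have := norm_sub_le (f u - f c) (f v - f c)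
    linarith
  set A : Set ℝ := {r | 0 < r ∧ r ≤ t ∧ P r} with hA
  have hAbdd : BddAbove A := ⟨t, fun r hr => hr.2.1⟩
  obtain ⟨η0, hη0, hblk0⟩ := hrc 0 le_rfl
  have hr0 : min (η0/2) t ∈ A := by
    refine ⟨lt_min (by linarith) ht, min_le_right _ _, 1, fun j => if j = 0 then 0 else min (η0/2) t,
      by omega, by simp, by simp, ?_, ?_⟩
    · intro j hj
      have : j = 0 := by omega
      subst this
      simp [lt_min (by linarith : (0:ℝ) < η0/2) ht]
    · intro j hj u v h1 h2 h3 h4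
      have : j = 0 := by omega
      subst this
      simp only [if_pos rfl, if_neg (by omega : (1:ℕ) ≠ 0)] at h1 h2 h3 h4
      refine hblk0 u v h1 ?_ h3 ?_ <;>
        [exact lt_of_lt_of_le h2 (by rw [zero_add]; exact (min_le_left _ _).trans (by linarith));
         exact lt_of_lt_of_le h4 (by rw [zero_add]; exact (min_le_left _ _).trans (by linarith))]
  set c := sSup A with hc
  have hcA : ∀ r ∈ A, r ≤ c := fun r hr => le_csSup hAbdd hr
  have hc0 : 0 < c := lt_of_lt_of_le hr0.1 (hcA _ hr0)
  have hct : c ≤ t := csSup_le ⟨_, hr0⟩ fun r hr => hr.2.1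
  have hPc : P c := by
    obtain ⟨Lf, hLf⟩ := hf.2 c hc0
    obtain ⟨η, hη, hηs⟩ : ∃ η > 0, ∀ u, c - η < u → u < c → ‖f u - Lf‖ < ε/2 := by
      obtain ⟨δ, hδ, h⟩ := Metric.tendsto_nhdsWithin_nhds.mp hLf (ε/2) (by linarith)
      refine ⟨δ, hδ, fun u h1 h2 => ?_⟩
      have := h (mem_Iio.mpr h2) (by rw [Real.dist_eq, abs_of_neg (by linarith)]; linarith)
      rwa [dist_eq_norm] at this
    obtain ⟨r, hrA, hrgt⟩ := exists_lt_of_lt_csSup ⟨_, hr0⟩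
      (show c - min η c / 2 < c by
        have : 0 < min η c := lt_min hη hc0
        linarith)
    rcases eq_or_lt_of_le (hcA r hrA) with h | h
    · rw [← h]; exact hrA.2.2
    · refine hext r c hrA.2.2 h fun u v h1 h2 h3 h4 => ?_
      have hmη : min η c / 2 < η := by
        have := min_le_left η c; linarith [lt_min hη hc0]
      have e1 : ‖f u - Lf‖ < ε/2 := hηs u (by linarith) h2
      have e2 : ‖f v - Lf‖ < ε/2 := hηs v (by linarith) h4
      have hid : f u - f v = (f u - Lf) - (f v - Lf) := by abel
      rw [hid]
      have := norm_sub_le (f u - Lf) (f v - Lf)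
      linarith
  have hceq : c = t := by
    by_contra hne
    have hclt : c < t := lt_of_le_of_ne hct hne
    obtain ⟨η1, hη1, hblk1⟩ := hrc c (le_of_lt hc0)
    have hr1A : min (c + η1/2) t ∈ A := by
      refine ⟨lt_of_lt_of_le hc0 (le_min (by linarith) (le_of_lt hclt)), min_le_right _ _, ?_⟩
      refine hext c _ hPc (lt_min (by linarith) hclt) fun u v h1 h2 h3 h4 => ?_
      have hm := min_le_left (c + η1/2) t
      exact hblk1 u v h1 (by linarith) h3 (by linarith)
    have := hcA _ hr1A
    have : c < min (c + η1/2) t := lt_min (by linarith) hclt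
    linarith [hcA _ hr1A]
  rw [hceq] at hPc
  exact hPc

lemma cadlag_bdd {f : ℝ → E} (hf : IsCadlag f) {t : ℝ} (ht : 0 < t) :
    ∃ M : ℝ, 0 < M ∧ ∀ u : ℝ, 0 ≤ u → u ≤ t → ‖f u‖ ≤ M := by
  obtain ⟨k, s, hk, h0, hkt, hinc, hosc⟩ := cadlag_osc hf ht one_pos
  refine ⟨(∑ j ∈ Finset.range (k + 1), ‖f (s j)‖) + 1, by positivity, fun u hu0 hut => ?_⟩
  have hsum : ∀ j ≤ k, ‖f (s j)‖ ≤ ∑ j ∈ Finset.range (k + 1), ‖f (s j)‖ := fun j hj =>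
    Finset.single_le_sum (f := fun j => ‖f (s j)‖) (fun i _ => norm_nonneg _)
      (Finset.mem_range.mpr (Nat.lt_succ_of_le hj))
  rcases eq_or_lt_of_le hut with h | h
  · subst h
    rw [← hkt]
    linarith [hsum k le_rfl]
  · rw [← hkt] at h
    obtain ⟨hJlt, hJ1, hJ2⟩ := find_block hk h0 hinc hu0 h
    set J := Nat.findGreatest (fun j => s j ≤ u) k
    have h1 : ‖f u - f (s J)‖ ≤ 1 := hosc J hJlt u (s J) hJ1 hJ2 le_rfl (hinc J hJlt)
    have h2 : ‖f u‖ ≤ ‖f (s J)‖ + ‖f u - f (s J)‖ := by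
      have h3 := norm_add_le (f (s J)) (f u - f (s J))
      simpa using h3
    linarith [hsum J (le_of_lt hJlt)]

section Bridge

variable {m : ℕ} {τ : ℕ → ℝ} {a b : ℝ}

lemma bridge_mono (hinc : ∀ i < m, τ i < τ (i + 1)) :
    ∀ {i j : ℕ}, i < j → j ≤ m → τ i < τ j := fun hij hjm => steps_lt hinc hij hjm

lemma bridge_partn (hm : 0 < m) (h0 : τ 0 = a) (hl : τ m = b)
    (hinc : ∀ i < m, τ i < τ (i + 1)) :
    Partn a b (Finset.image τ (Finset.range (m + 1))) := by
  refine ⟨?_, ?_, ?_⟩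
  · exact Finset.mem_image.mpr ⟨0, Finset.mem_range.mpr (by omega), h0⟩
  · exact Finset.mem_image.mpr ⟨m, Finset.mem_range.mpr (by omega), hl⟩
  · intro w hw
    obtain ⟨i, hi, rfl⟩ := Finset.mem_image.mp hw
    rw [Finset.mem_range] at hi
    constructor
    · rw [← h0]; exact steps_le hinc (Nat.zero_le i) (by omega)
    · rw [← hl]; exact steps_le hinc (by omega) le_rfl

lemma bridge_filter (hm : 0 < m) (h0 : τ 0 = a) (hl : τ m = b)
    (hinc : ∀ i < m, τ i < τ (i + 1)) :
    (Finset.image τ (Finset.range (m + 1))).filter (fun w => w < b) =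
      Finset.image τ (Finset.range m) := by
  ext w
  simp only [Finset.mem_filter, Finset.mem_image, Finset.mem_range]
  constructor
  · rintro ⟨⟨i, hi, rfl⟩, hlt⟩
    refine ⟨i, ?_, rfl⟩
    by_contra hge
    have : i = m := by omega
    subst this
    rw [hl] at hlt
    exact lt_irrefl _ hlt
  · rintro ⟨i, hi, rfl⟩
    exact ⟨⟨i, by omega, rfl⟩, by rw [← hl]; exact steps_lt hinc hi le_rfl⟩

lemma bridge_nxt (hm : 0 < m) (h0 : τ 0 = a) (hl : τ m = b)
    (hinc : ∀ i < m, τ i < τ (i + 1)) {i : ℕ} (hi : i < m) :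
    nxt (Finset.image τ (Finset.range (m + 1))) (τ i) = τ (i + 1) := by
  have him : τ (i + 1) ∈ Finset.image τ (Finset.range (m + 1)) :=
    Finset.mem_image.mpr ⟨i + 1, Finset.mem_range.mpr (by omega), rfl⟩
  obtain ⟨hn1, hn2, hn3⟩ := nxt_spec him (hinc i hi)
  obtain ⟨j, hj, hje⟩ := Finset.mem_image.mp hn1
  rw [Finset.mem_range] at hj
  have hij : i < j := by
    by_contra hge
    have : τ j ≤ τ i := by
      rcases Nat.lt_or_ge j i with h | h
      · exact le_of_lt (steps_lt hinc h (by omega))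
      · have : j = i := by omega
        subst this; exact le_rfl
    rw [hje] at this
    linarith
  have h1 : τ (i + 1) ≤ τ j := steps_le hinc (by omega) (by omega)
  rw [hje] at h1
  exact le_antisymm (hn3 _ him (hinc i hi)) h1

lemma bridge_sum (hm : 0 < m) (h0 : τ 0 = a) (hl : τ m = b)
    (hinc : ∀ i < m, τ i < τ (i + 1)) (g : ℝ → ℝ → ℝ) :
    ∑ w ∈ (Finset.image τ (Finset.range (m + 1))).filter (fun w => w < b),
        g w (nxt (Finset.image τ (Finset.range (m + 1))) w) =
      ∑ i ∈ Finset.range m, g (τ i) (τ (i + 1)) := by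
  rw [bridge_filter hm h0 hl hinc]
  rw [Finset.sum_image ?_]
  · refine Finset.sum_congr rfl fun i hi => ?_
    rw [Finset.mem_range] at hi
    rw [bridge_nxt hm h0 hl hinc hi]
  · intro i hi j hj hij
    rw [Finset.coe_range, Set.mem_Iio] at hi hj
    by_contra hne
    rcases Nat.lt_or_ge i j with h | h
    · have := steps_lt hinc h (by omega : j ≤ m); rw [hij] at this; exact lt_irrefl _ this
    · have : j < i := by omega
      have := steps_lt hinc this (by omega : i ≤ m); rw [hij] at this; exact lt_irrefl _ this

lemma partn_to_seq {F : Finset ℝ} (hab : a < b) (hF : Partn a b F) :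
    ∃ (m : ℕ) (τ : ℕ → ℝ), 0 < m ∧ τ 0 = a ∧ τ m = b ∧ (∀ i < m, τ i < τ (i + 1)) ∧
      Finset.image τ (Finset.range (m + 1)) = F := by
  have hcard : 2 ≤ F.card := Finset.one_lt_card.mpr ⟨a, hF.1, b, hF.2.1, ne_of_lt hab⟩
  set e := F.orderIsoOfFin rfl with he
  set m := F.card - 1 with hm
  set τ : ℕ → ℝ := fun i => if h : i < F.card then (e ⟨i, h⟩ : ℝ) else b with hτ
  have hτlt : ∀ i (h : i < F.card), τ i = (e ⟨i, h⟩ : ℝ) := fun i h => dif_pos h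
  have hmem : ∀ i (h : i < F.card), (e ⟨i, h⟩ : ℝ) ∈ F := fun i h => (e ⟨i, h⟩).2
  have hinc : ∀ i < m, τ i < τ (i + 1) := by
    intro i hi
    rw [hτlt i (by omega), hτlt (i + 1) (by omega)]
    exact e.strictMono (by simp [Fin.lt_def])
  have h0 : τ 0 = a := by
    rw [hτlt 0 (by omega)]
    refine le_antisymm ?_ (hF.2.2 _ (hmem 0 (by omega))).1
    obtain ⟨⟨ia, hia⟩, hiae⟩ := e.surjective ⟨a, hF.1⟩
    have : (e ⟨0, by omega⟩ : ℝ) ≤ (e ⟨ia, hia⟩ : ℝ) := by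
      have := e.monotone (show (⟨0, by omega⟩ : Fin F.card) ≤ ⟨ia, hia⟩ by simp [Fin.le_def])
      exact this
    rw [hiae] at this
    exact this
  have hlast : τ m = b := by
    rw [hτlt m (by omega)]
    refine le_antisymm (hF.2.2 _ (hmem m (by omega))).2 ?_
    obtain ⟨⟨ib, hib⟩, hibe⟩ := e.surjective ⟨b, hF.2.1⟩
    have : (e ⟨ib, hib⟩ : ℝ) ≤ (e ⟨m, by omega⟩ : ℝ) := by
      have := e.monotone (show (⟨ib, hib⟩ : Fin F.card) ≤ ⟨m, by omega⟩ by
        simp [Fin.le_def]; omega)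
      exact this
    rw [hibe] at this
    exact this
  refine ⟨m, τ, by omega, h0, hlast, hinc, ?_⟩
  have hsub : Finset.image τ (Finset.range (m + 1)) ⊆ F := by
    intro w hw
    obtain ⟨i, hi, rfl⟩ := Finset.mem_image.mp hw
    rw [Finset.mem_range] at hi
    rw [hτlt i (by omega)]
    exact hmem i (by omega)
  refine Finset.eq_of_subset_of_card_le hsub ?_
  have hinj : Set.InjOn τ (Finset.range (m + 1)) := by
    intro i hi j hj hij
    rw [Finset.coe_range, Set.mem_Iio] at hi hj
    by_contra hne
    rcases Nat.lt_or_ge i j with h | h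
    · have := steps_lt hinc h (by omega : j ≤ m); rw [hij] at this; exact lt_irrefl _ this
    · have : j < i := by omega
      have := steps_lt hinc this (by omega : i ≤ m); rw [hij] at this; exact lt_irrefl _ this
  rw [Finset.card_image_of_injOn hinj, Finset.card_range]
  omega

lemma bridge_mesh (hm : 0 < m) (h0 : τ 0 = a) (hl : τ m = b)
    (hinc : ∀ i < m, τ i < τ (i + 1)) {δ : ℝ} (hδ : ∀ i < m, τ (i + 1) - τ i < δ) :
    ∀ w ∈ Finset.image τ (Finset.range (m + 1)), w < b →
      nxt (Finset.image τ (Finset.range (m + 1))) w - w < δ := by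
  intro w hw hwb
  have : w ∈ (Finset.image τ (Finset.range (m + 1))).filter (fun w => w < b) :=
    Finset.mem_filter.mpr ⟨hw, hwb⟩
  rw [bridge_filter hm h0 hl hinc] at this
  obtain ⟨i, hi, rfl⟩ := Finset.mem_image.mp this
  rw [Finset.mem_range] at hi
  rw [bridge_nxt hm h0 hl hinc hi]
  exact hδ i hi

end Bridge

section Refine

variable {X : Type*} [NormedAddCommGroup X] [NormedSpace ℝ X]

lemma prd_partn_spec {F : Finset ℝ} {t w : ℝ} (hF : Partn 0 t F) (hw0 : 0 ≤ w) :
    prd F w ∈ F ∧ prd F w ≤ w ∧ ∀ v ∈ F, v ≤ w → v ≤ prd F w :=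
  prd_spec hF.1 hw0

lemma lt_nxt_prd {F : Finset ℝ} {t w : ℝ} (hF : Partn 0 t F) (hw0 : 0 ≤ w) (hwt : w < t) :
    w < nxt F (prd F w) := by
  obtain ⟨hp1, hp2, hp3⟩ := prd_partn_spec hF hw0
  by_contra hle
  push_neg at hle
  obtain ⟨hn1, hn2, _⟩ := nxt_spec hF.2.1 (lt_of_le_of_lt hp2 hwt)
  have := hp3 _ hn1 hle
  linarith

lemma RS_refine (t : ℝ) (x : ℝ → X) (ystar : ℝ → (X →L[ℝ] ℝ)) {F G : Finset ℝ}
    (hF : Partn 0 t F) (hG : Partn 0 t G) (hFG : F ⊆ G) :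
    ∑ w ∈ F.filter (fun w => w < t), (ystar (nxt F w) - ystar w) (x w) =
      ∑ w ∈ G.filter (fun w => w < t), (ystar (nxt G w) - ystar w) (x (prd F w)) := by
  have hmap : ∀ w ∈ G.filter (fun w => w < t), prd F w ∈ F.filter (fun w => w < t) := by
    intro w hw
    rw [Finset.mem_filter] at hw ⊢
    obtain ⟨hp1, hp2, _⟩ := prd_partn_spec hF (hG.2.2 w hw.1).1
    exact ⟨hp1, lt_of_le_of_lt hp2 hw.2⟩
  rw [← Finset.sum_fiberwise_of_maps_to hmap
    (fun w => (ystar (nxt G w) - ystar w) (x (prd F w)))]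
  refine Finset.sum_congr rfl fun u hu => ?_
  rw [Finset.mem_filter] at hu
  obtain ⟨huF, hut⟩ := hu
  have hu0 : 0 ≤ u := (hF.2.2 u huF).1
  obtain ⟨hn1, hn2, hn3⟩ := nxt_spec hF.2.1 hut
  have hfiber : (G.filter (fun w => w < t)).filter (fun w => prd F w = u) =
      G.filter (fun w => u ≤ w ∧ w < nxt F u) := by
    ext w
    simp only [Finset.mem_filter, and_assoc]
    constructor
    · rintro ⟨hwG, hwt, hpe⟩
      obtain ⟨hp1, hp2, hp3⟩ := prd_partn_spec hF (hG.2.2 w hwG).1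
      refine ⟨hwG, by rw [← hpe]; exact hp2, ?_⟩
      by_contra hge
      push_neg at hge
      have := hp3 _ hn1 hge
      rw [hpe] at this
      linarith
    · rintro ⟨hwG, huw, hwn⟩
      obtain ⟨hp1, hp2, hp3⟩ := prd_partn_spec hF (hG.2.2 w hwG).1
      have h1 : u ≤ prd F w := hp3 u huF huw
      have h2 : prd F w ≤ u := by
        by_contra hgt
        push_neg at hgt
        have := hn3 _ hp1 hgt
        linarith
      have hwt : w < t := lt_of_lt_of_le hwn ((hF.2.2 _ hn1).2)
      exact ⟨hwG, hwt, le_antisymm h2 h1⟩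
  rw [hfiber]
  have hcongr : ∀ w ∈ G.filter (fun w => u ≤ w ∧ w < nxt F u),
      (ystar (nxt G w) - ystar w) (x (prd F w)) = (ystar (nxt G w) - ystar w) (x u) := by
    intro w hw
    rw [Finset.mem_filter] at hw
    have : prd F w = u := by
      obtain ⟨hp1, hp2, hp3⟩ := prd_partn_spec hF (hG.2.2 w hw.1).1
      refine le_antisymm ?_ (hp3 u huF hw.2.1)
      by_contra hgt
      push_neg at hgt
      have := hn3 _ hp1 hgt
      linarith [hw.2.2]
    rw [this]
  rw [Finset.sum_congr rfl hcongr]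
  have htele := tele ystar G (G.filter (fun w => u ≤ w ∧ w < nxt F u)).card u (nxt F u)
    (hFG huF) (hFG hn1) hn2 le_rfl
  have happ : ∑ w ∈ G.filter (fun w => u ≤ w ∧ w < nxt F u),
      (ystar (nxt G w) - ystar w) (x u) =
      (∑ w ∈ G.filter (fun w => u ≤ w ∧ w < nxt F u), (ystar (nxt G w) - ystar w)) (x u) := by
    rw [ContinuousLinearMap.sum_apply]
  rw [happ, htele]

end Refine

section KeyEst

variable {X : Type*} [NormedAddCommGroup X] [NormedSpace ℝ X]

lemma key_estimate {t : ℝ} (ht : 0 < t) {x : ℝ → X} (hx : IsCadlag x)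
    {ystar : ℝ → (X →L[ℝ] ℝ)} (hy : IsCadlag ystar) {V : ℝ}
    (hVsum : ∀ a b : ℝ, 0 ≤ a → a ≤ b → b ≤ t → ∀ F, Partn a b F → vsum ystar b F ≤ V)
    {ε : ℝ} (hε : 0 < ε) :
    ∃ δ > 0, ∀ F G : Finset ℝ, Partn 0 t F → Partn 0 t G → F ⊆ G →
      (∀ w ∈ F, w < t → nxt F w - w < δ) →
      |(∑ w ∈ G.filter (fun w => w < t), (ystar (nxt G w) - ystar w) (x w)) -
        ∑ w ∈ F.filter (fun w => w < t), (ystar (nxt F w) - ystar w) (x w)| ≤ ε := by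
  have hV0 : 0 ≤ V := le_trans (vsum_nonneg ystar t {0, t})
    (hVsum 0 t le_rfl (le_of_lt ht) le_rfl _ (partn_pair (le_of_lt ht)))
  obtain ⟨M, hM0, hM⟩ := cadlag_bdd hx ht
  set ε1 := ε / (2 * (V + 1)) with hε1
  have hε1pos : 0 < ε1 := div_pos hε (by linarith)
  obtain ⟨k, sp, hk, hsp0, hspt, hspinc, hsposc⟩ := cadlag_osc hx ht hε1pos
  set β := ε / (4 * M * k + 1) with hβ
  have hMk : (0:ℝ) < 4 * M * k + 1 := by positivity
  have hβpos : 0 < β := div_pos hε hMk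
  have hsp_nonneg : ∀ j ≤ k, 0 ≤ sp j := fun j hj => by
    rw [← hsp0]; exact steps_le hspinc (Nat.zero_le j) hj
  have hsp_lt_t : ∀ j < k, sp j < t := fun j hj => by
    rw [← hspt]; exact steps_lt hspinc hj le_rfl
  have hdex : ∀ j : ℕ, j < k → ∃ dd, sp j < dd ∧ dd ≤ t ∧ Var ystar (sp j) dd < β := fun j hj =>
    Var_right_small (hsp_lt_t j hj) (hy.1 (sp j) (hsp_nonneg j (le_of_lt hj)))
      (fun a b h1 h2 h3 F hF =>
        hVsum a b (le_trans (hsp_nonneg j (le_of_lt hj)) h1) h2 h3 F hF) hβpos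
  choose! d hd1 hd2 hd3 using hdex
  have hrne : (Finset.range k).Nonempty := ⟨0, Finset.mem_range.mpr hk⟩
  set δ := (Finset.range k).inf' hrne (fun j => (d j - sp j) / 2) with hδdef
  have hδpos : 0 < δ := by
    rw [hδdef, Finset.lt_inf'_iff]
    intro j hj
    rw [Finset.mem_range] at hj
    linarith [hd1 j hj]
  have hδle : ∀ j < k, δ ≤ (d j - sp j) / 2 := fun j hj =>
    Finset.inf'_le _ (Finset.mem_range.mpr hj)
  refine ⟨δ, hδpos, ?_⟩
  intro F G hF hG hFG hmesh
  rw [RS_refine t x ystar hF hG hFG, ← Finset.sum_sub_distrib]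
  have hterm : ∀ w ∈ G.filter (fun w => w < t),
      (ystar (nxt G w) - ystar w) (x (prd F w)) - (ystar (nxt G w) - ystar w) (x w) =
      (ystar (nxt G w) - ystar w) (x (prd F w) - x w) := fun w _ => (map_sub _ _ _).symm
  have hSdef : G.filter (fun w => w < t) = G.filter (fun w => w < t) := rfl
  have hterm : ∀ w ∈ G.filter (fun w => w < t),
      (ystar (nxt G w) - ystar w) (x w) - (ystar (nxt G w) - ystar w) (x (prd F w)) =
      (ystar (nxt G w) - ystar w) (x w - x (prd F w)) := fun w _ => (map_sub _ _ _).symm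
  rw [Finset.sum_congr rfl hterm]
  have habs : |∑ w ∈ G.filter (fun w => w < t),
        (ystar (nxt G w) - ystar w) (x w - x (prd F w))| ≤
      ∑ w ∈ G.filter (fun w => w < t),
        ‖ystar (nxt G w) - ystar w‖ * ‖x w - x (prd F w)‖ := by
    refine le_trans (Finset.abs_sum_le_sum_abs _ _) (Finset.sum_le_sum fun w _ => ?_)
    rw [← Real.norm_eq_abs]
    exact ContinuousLinearMap.le_opNorm _ _
  refine le_trans habs ?_
  set S := G.filter (fun w => w < t) with hS
  set J : ℝ → ℕ := fun w => Nat.findGreatest (fun j => sp j ≤ w) k with hJdef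
  have hwS : ∀ w ∈ S, w ∈ G ∧ 0 ≤ w ∧ w < t := by
    intro w hw
    rw [hS, Finset.mem_filter] at hw
    exact ⟨hw.1, (hG.2.2 w hw.1).1, hw.2⟩
  have hJprops : ∀ w ∈ S, J w < k ∧ sp (J w) ≤ w ∧ w < sp (J w + 1) := by
    intro w hw
    obtain ⟨_, h1, h2⟩ := hwS w hw
    exact find_block hk hsp0 hspinc h1 (by rw [hspt]; exact h2)
  have hprd : ∀ w ∈ S, prd F w ∈ F ∧ prd F w ≤ w ∧ w < nxt F (prd F w) ∧
      nxt F (prd F w) - prd F w < δ ∧ 0 ≤ prd F w := by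
    intro w hw
    obtain ⟨hwG, hw0, hwt⟩ := hwS w hw
    obtain ⟨hp1, hp2, _⟩ := prd_partn_spec hF hw0
    have h3 := lt_nxt_prd hF hw0 hwt
    exact ⟨hp1, hp2, h3, hmesh _ hp1 (lt_of_le_of_lt hp2 hwt), (hF.2.2 _ hp1).1⟩
  set Bad : ℝ → Prop := fun w => prd F w < sp (J w) with hBaddef
  rw [← Finset.sum_filter_add_sum_filter_not S Bad
    (fun w => ‖ystar (nxt G w) - ystar w‖ * ‖x w - x (prd F w)‖)]
  -- good part
  have hvsumG : ∑ w ∈ S, ‖ystar (nxt G w) - ystar w‖ = vsum ystar t G := rfl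
  have hgood : ∑ w ∈ S.filter (fun w => ¬ Bad w),
      ‖ystar (nxt G w) - ystar w‖ * ‖x w - x (prd F w)‖ ≤ ε / 2 := by
    have h1 : ∀ w ∈ S.filter (fun w => ¬ Bad w),
        ‖ystar (nxt G w) - ystar w‖ * ‖x w - x (prd F w)‖ ≤
        ‖ystar (nxt G w) - ystar w‖ * ε1 := by
      intro w hw
      rw [Finset.mem_filter] at hw
      obtain ⟨hwSm, hwnb⟩ := hw
      obtain ⟨hJ1, hJ2, hJ3⟩ := hJprops w hwSm
      obtain ⟨hp1, hp2, _, _, _⟩ := hprd w hwSm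
      have hoscw : ‖x w - x (prd F w)‖ ≤ ε1 := by
        refine hsposc (J w) hJ1 w (prd F w) hJ2 hJ3 (not_lt.mp hwnb) ?_
        exact lt_of_le_of_lt hp2 hJ3
      exact mul_le_mul_of_nonneg_left hoscw (norm_nonneg _)
    refine le_trans (Finset.sum_le_sum h1) ?_
    rw [← Finset.sum_mul]
    have h2 : ∑ w ∈ S.filter (fun w => ¬ Bad w), ‖ystar (nxt G w) - ystar w‖ ≤ V := by
      refine le_trans (Finset.sum_le_sum_of_subset_of_nonneg (Finset.filter_subset _ _)
        (fun _ _ _ => norm_nonneg _)) ?_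
      rw [hvsumG]
      exact hVsum 0 t le_rfl (le_of_lt ht) le_rfl G hG
    have h3 : (∑ w ∈ S.filter (fun w => ¬ Bad w), ‖ystar (nxt G w) - ystar w‖) * ε1 ≤ V * ε1 :=
      mul_le_mul_of_nonneg_right h2 (le_of_lt hε1pos)
    refine le_trans h3 ?_
    have hid2 : V * ε1 = (V * ε) / (2 * (V + 1)) := by rw [hε1]; ring
    rw [hid2, div_le_div_iff₀ (by linarith : (0:ℝ) < 2 * (V + 1)) (by norm_num : (0:ℝ) < 2)]
    nlinarith [mul_nonneg (le_of_lt hε) hV0]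
  -- bad part
  have hbadj : ∀ j ∈ Finset.range k, ∑ w ∈ (S.filter Bad).filter (fun w => J w = j),
      ‖ystar (nxt G w) - ystar w‖ ≤ β := by
    intro j hjr
    rw [Finset.mem_range] at hjr
    have hspd : sp j < d j := hd1 j hjr
    set Hj := (G.filter (fun v => sp j ≤ v ∧ v ≤ d j)) ∪ {sp j, d j} with hHjdef
    have hspHj : sp j ∈ Hj := Finset.mem_union_right _ (Finset.mem_insert_self _ _)
    have hdHj : d j ∈ Hj := Finset.mem_union_right _
      (Finset.mem_insert_of_mem (Finset.mem_singleton_self _))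
    have hPartHj : Partn (sp j) (d j) Hj := by
      refine ⟨hspHj, hdHj, fun v hv => ?_⟩
      rcases Finset.mem_union.mp hv with h | h
      · rw [Finset.mem_filter] at h
        exact h.2
      · rcases Finset.mem_insert.mp h with h | h
        · exact ⟨le_of_eq h.symm, h ▸ le_of_lt hspd⟩
        · rw [Finset.mem_singleton] at h
          exact ⟨h ▸ le_of_lt hspd, le_of_eq h⟩
    have hkey : ∀ w ∈ (S.filter Bad).filter (fun w => J w = j),
        w ∈ Hj.filter (fun v => v < d j) ∧ nxt Hj w = nxt G w := by
      intro w hw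
      rw [Finset.mem_filter] at hw
      obtain ⟨hwSB, hJw⟩ := hw
      rw [Finset.mem_filter] at hwSB
      obtain ⟨hwSm, hwBad⟩ := hwSB
      obtain ⟨hwG, hw0, hwt⟩ := hwS w hwSm
      obtain ⟨hJ1, hJ2, hJ3⟩ := hJprops w hwSm
      rw [hJw] at hJ2 hJ3
      rw [hBaddef] at hwBad
      simp only [hJw] at hwBad
      obtain ⟨hp1, hp2, hp3, hp4, hp5⟩ := hprd w hwSm
      obtain ⟨hnG1, hnG2, hnG3⟩ := nxt_spec hG.2.1 hwt
      have hnle : nxt G w ≤ nxt F (prd F w) := hnG3 _ (hFG (nxt_spec hF.2.1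
        (lt_of_le_of_lt hp2 hwt)).1) hp3
      have hδj : δ ≤ (d j - sp j) / 2 := hδle j hjr
      have hbound : nxt G w < d j := by
        have : nxt F (prd F w) < prd F w + δ := by linarith
        have h2 : prd F w < sp j := hwBad
        linarith
      have hwd : w ≤ d j := le_of_lt (lt_trans hnG2 hbound)
      have hwHj : w ∈ Hj := Finset.mem_union_left _
        (Finset.mem_filter.mpr ⟨hwG, hJ2, hwd⟩)
      have hnGHj : nxt G w ∈ Hj := Finset.mem_union_left _
        (Finset.mem_filter.mpr ⟨hnG1, le_trans hJ2 (le_of_lt hnG2), le_of_lt hbound⟩)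
      obtain ⟨hm1, hm2, hm3⟩ := nxt_spec hnGHj hnG2
      have hmle : nxt Hj w ≤ nxt G w := hm3 _ hnGHj hnG2
      have hmeq : nxt Hj w = nxt G w := by
        rcases Finset.mem_union.mp hm1 with h | h
        · rw [Finset.mem_filter] at h
          exact le_antisymm hmle (hnG3 _ h.1 hm2)
        · exfalso
          rcases Finset.mem_insert.mp h with h | h
          · rw [h] at hm2; linarith
          · rw [Finset.mem_singleton] at h
            rw [h] at hmle; linarith
      exact ⟨Finset.mem_filter.mpr ⟨hwHj, lt_trans hnG2 hbound⟩, hmeq⟩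
    have hcongr : ∑ w ∈ (S.filter Bad).filter (fun w => J w = j),
        ‖ystar (nxt G w) - ystar w‖ =
        ∑ w ∈ (S.filter Bad).filter (fun w => J w = j), ‖ystar (nxt Hj w) - ystar w‖ :=
      Finset.sum_congr rfl fun w hw => by rw [(hkey w hw).2]
    rw [hcongr]
    have hsubs : (S.filter Bad).filter (fun w => J w = j) ⊆ Hj.filter (fun v => v < d j) :=
      fun w hw => (hkey w hw).1
    have hle1 : ∑ w ∈ (S.filter Bad).filter (fun w => J w = j), ‖ystar (nxt Hj w) - ystar w‖ ≤
        vsum ystar (d j) Hj :=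
      Finset.sum_le_sum_of_subset_of_nonneg hsubs (fun _ _ _ => norm_nonneg _)
    refine le_trans hle1 (le_trans (vsum_le_Var (C := V) ?_ hPartHj) (le_of_lt (hd3 j hjr)))
    exact fun F' hF' => hVsum (sp j) (d j) (hsp_nonneg j (le_of_lt hjr)) (le_of_lt hspd)
      (hd2 j hjr) F' hF'
  have hbad : ∑ w ∈ S.filter Bad,
      ‖ystar (nxt G w) - ystar w‖ * ‖x w - x (prd F w)‖ ≤ ε / 2 := by
    have h1 : ∀ w ∈ S.filter Bad,
        ‖ystar (nxt G w) - ystar w‖ * ‖x w - x (prd F w)‖ ≤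
        ‖ystar (nxt G w) - ystar w‖ * (2 * M) := by
      intro w hw
      rw [Finset.mem_filter] at hw
      obtain ⟨hwG, hw0, hwt⟩ := hwS w hw.1
      obtain ⟨hp1, hp2, _, _, hp5⟩ := hprd w hw.1
      have hb1 : ‖x w‖ ≤ M := hM w hw0 (le_of_lt hwt)
      have hb2 : ‖x (prd F w)‖ ≤ M := hM _ hp5 (le_trans hp2 (le_of_lt hwt))
      have : ‖x w - x (prd F w)‖ ≤ 2 * M := le_trans (norm_sub_le _ _) (by linarith)
      exact mul_le_mul_of_nonneg_left this (norm_nonneg _)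
    refine le_trans (Finset.sum_le_sum h1) ?_
    rw [← Finset.sum_mul]
    have h2 : ∑ w ∈ S.filter Bad, ‖ystar (nxt G w) - ystar w‖ ≤ k * β := by
      have hmap : ∀ w ∈ S.filter Bad, J w ∈ Finset.range k := by
        intro w hw
        rw [Finset.mem_filter] at hw
        exact Finset.mem_range.mpr (hJprops w hw.1).1
      rw [← Finset.sum_fiberwise_of_maps_to hmap (fun w => ‖ystar (nxt G w) - ystar w‖)]
      refine le_trans (Finset.sum_le_sum hbadj) ?_
      rw [Finset.sum_const, Finset.card_range, nsmul_eq_mul]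
    have h3 : (∑ w ∈ S.filter Bad, ‖ystar (nxt G w) - ystar w‖) * (2 * M) ≤
        (k * β) * (2 * M) := mul_le_mul_of_nonneg_right h2 (by linarith)
    refine le_trans h3 ?_
    have hk0 : (0:ℝ) ≤ (k:ℝ) := Nat.cast_nonneg k
    have hid : (k:ℝ) * β * (2 * M) = (2 * M * k * ε) / (4 * M * k + 1) := by
      rw [hβ]; ring
    rw [hid, div_le_div_iff₀ hMk (by norm_num : (0:ℝ) < 2)]
    nlinarith [mul_nonneg (mul_nonneg hM0.le hk0) hε.le]
  linarith

end KeyEst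

end RSAux

theorem riemann_stieltjes_sums_converge_dual_pairing
    {X : Type*} [NormedAddCommGroup X] [NormedSpace ℝ X] [CompleteSpace X]
    (t : ℝ) (ht : 0 < t)
    (x : ℝ → X) (hx : IsCadlag x)
    (ystar : ℝ → (X →L[ℝ] ℝ)) (hy : IsCadlag ystar)
    (V : ℝ)
    (hV : ∀ σ : IntervalPartition t,
      ∑ i ∈ Finset.range σ.m, ‖ystar (σ.τ (i + 1)) - ystar (σ.τ i)‖ ≤ V) :
    ∃ L : ℝ, ∀ ε : ℝ, 0 < ε → ∃ δ : ℝ, 0 < δ ∧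
      ∀ σ : IntervalPartition t, (∀ i < σ.m, σ.τ (i + 1) - σ.τ i < δ) →
        |(∑ i ∈ Finset.range σ.m,
            (ystar (σ.τ (i + 1)) - ystar (σ.τ i)) (x (σ.τ i))) - L| < ε := by
  classical
  have hVsum : ∀ a b : ℝ, 0 ≤ a → a ≤ b → b ≤ t → ∀ F, Partn a b F → vsum ystar b F ≤ V := by
    have h0t : ∀ F, Partn 0 t F → vsum ystar t F ≤ V := by
      intro F hF
      obtain ⟨m, τ, hm, h0, hl, hinc, himg⟩ := partn_to_seq ht hF
      have hb := bridge_sum hm h0 hl hinc (fun u v => ‖ystar v - ystar u‖)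
      rw [himg] at hb
      have hvs : vsum ystar t F = ∑ i ∈ Finset.range m, ‖ystar (τ (i + 1)) - ystar (τ i)‖ := hb
      rw [hvs]
      exact hV ⟨m, τ, hm, h0, hl, hinc⟩
    intro a b ha hab hbt F hF
    exact le_trans (vsum_extend ystar hF ha hbt) (h0t _ (partn_extend hF ha hbt))
  -- uniform partitions
  set τu : ℕ → ℕ → ℝ := fun n i => (i : ℝ) * t / (n + 1) with hτu
  have hτu0 : ∀ n, τu n 0 = 0 := fun n => by simp [hτu]
  have hτul : ∀ n : ℕ, τu n (n + 1) = t := fun n => by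
    rw [hτu]
    have : ((n : ℝ) + 1) ≠ 0 := by positivity
    field_simp
    push_cast; rfl
  have hτustep : ∀ n i : ℕ, τu n (i + 1) - τu n i = t / (n + 1) := by
    intro n i
    rw [hτu]
    push_cast
    ring
  have hτuinc : ∀ n : ℕ, ∀ i < n + 1, τu n i < τu n (i + 1) := by
    intro n i _
    have h1 : (0:ℝ) < t / (n + 1) := by positivity
    linarith [hτustep n i]
  set Fu : ℕ → Finset ℝ := fun n => Finset.image (τu n) (Finset.range (n + 2)) with hFu
  have hFuP : ∀ n, Partn 0 t (Fu n) := fun n =>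
    bridge_partn (by omega) (hτu0 n) (hτul n) (hτuinc n)
  have hFuMesh : ∀ (n : ℕ) (δ' : ℝ), t / (n + 1) < δ' →
      ∀ w ∈ Fu n, w < t → nxt (Fu n) w - w < δ' := by
    intro n δ' h
    exact bridge_mesh (by omega) (hτu0 n) (hτul n) (hτuinc n)
      (fun i hi => by rw [hτustep n i]; exact h)
  set RS : Finset ℝ → ℝ :=
    fun F => ∑ w ∈ F.filter (fun w => w < t), (ystar (nxt F w) - ystar w) (x w) with hRS
  have hpair : ∀ ε : ℝ, 0 < ε → ∃ δ > 0, ∀ F F' : Finset ℝ, Partn 0 t F → Partn 0 t F' →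
      (∀ w ∈ F, w < t → nxt F w - w < δ) → (∀ w ∈ F', w < t → nxt F' w - w < δ) →
      |RS F - RS F'| ≤ 2 * ε := by
    intro ε hε
    obtain ⟨δ, hδ, hkey⟩ := key_estimate ht hx hy hVsum hε
    refine ⟨δ, hδ, fun F F' hF hF' hm hm' => ?_⟩
    have hU : Partn 0 t (F ∪ F') := by
      refine ⟨Finset.mem_union_left _ hF.1, Finset.mem_union_left _ hF.2.1, fun w hw => ?_⟩
      rcases Finset.mem_union.mp hw with h | h
      · exact hF.2.2 w h
      · exact hF'.2.2 w h
    have h1 := hkey F (F ∪ F') hF hU Finset.subset_union_left hm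
    have h2 := hkey F' (F ∪ F') hF' hU Finset.subset_union_right hm'
    have hid : RS F - RS F' = (RS (F ∪ F') - RS F') - (RS (F ∪ F') - RS F) := by ring
    rw [hid]
    have h3 := abs_sub (RS (F ∪ F') - RS F') (RS (F ∪ F') - RS F)
    linarith
  set aseq : ℕ → ℝ := fun n => RS (Fu n) with haseq
  have hca : CauchySeq aseq := by
    rw [Metric.cauchySeq_iff]
    intro ε hε
    obtain ⟨δ, hδ, hp⟩ := hpair (ε/3) (by linarith)
    obtain ⟨N, hN⟩ := exists_nat_gt (t / δ)
    have hmesh : ∀ n : ℕ, N ≤ n → t / (n + 1) < δ := by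
      intro n hn
      rw [div_lt_iff₀ (by positivity : (0:ℝ) < (n:ℝ) + 1)]
      rw [div_lt_iff₀ hδ] at hN
      have : (N:ℝ) ≤ n := Nat.cast_le.mpr hn
      nlinarith
    refine ⟨N, fun m hm n hn => ?_⟩
    rw [Real.dist_eq]
    have := hp (Fu m) (Fu n) (hFuP m) (hFuP n)
      (hFuMesh m δ (hmesh m hm)) (hFuMesh n δ (hmesh n hn))
    calc |aseq m - aseq n| ≤ 2 * (ε/3) := this
    _ < ε := by linarith
  obtain ⟨L, hL⟩ := cauchySeq_tendsto_of_complete hca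
  refine ⟨L, ?_⟩
  intro ε hε
  obtain ⟨δ, hδ, hp⟩ := hpair (ε/4) (by linarith)
  refine ⟨δ, hδ, ?_⟩
  intro σ hσ
  set Fσ := Finset.image σ.τ (Finset.range (σ.m + 1)) with hFσ
  have hσP : Partn 0 t Fσ := bridge_partn σ.m_pos σ.first σ.last σ.increasing
  have hσsum : RS Fσ = ∑ i ∈ Finset.range σ.m,
      (ystar (σ.τ (i + 1)) - ystar (σ.τ i)) (x (σ.τ i)) :=
    bridge_sum σ.m_pos σ.first σ.last σ.increasing (fun u v => (ystar v - ystar u) (x u))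
  have hσmesh : ∀ w ∈ Fσ, w < t → nxt Fσ w - w < δ :=
    bridge_mesh σ.m_pos σ.first σ.last σ.increasing hσ
  obtain ⟨N1, hN1⟩ := (Metric.tendsto_atTop.mp hL) (ε/4) (by linarith)
  obtain ⟨N2, hN2⟩ := exists_nat_gt (t / δ)
  set n := max N1 N2 with hn
  have hmeshn : t / (n + 1) < δ := by
    rw [div_lt_iff₀ (by positivity : (0:ℝ) < (n:ℝ) + 1)]
    rw [div_lt_iff₀ hδ] at hN2
    have : (N2:ℝ) ≤ n := Nat.cast_le.mpr (le_max_right _ _)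
    nlinarith
  have h1 : |RS Fσ - aseq n| ≤ 2 * (ε/4) :=
    hp Fσ (Fu n) hσP (hFuP n) hσmesh (hFuMesh n δ hmeshn)
  have h2 : |aseq n - L| < ε/4 := by
    have := hN1 n (le_max_left _ _)
    rwa [Real.dist_eq] at this
  rw [← hσsum]
  calc |RS Fσ - L| = |(RS Fσ - aseq n) + (aseq n - L)| := by ring_nf
  _ ≤ |RS Fσ - aseq n| + |aseq n - L| := abs_add_le _ _
  _ < ε := by linarith
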